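/- Define β*(r) = (1+3r)/2 for 0 < r ≤ 1/5 and β*(r) = √(1 - (max(1-2r,0))²) for r > 1/5; define β_IDJ*(r) = 1/2 + r for 0 < r ≤ 1/4 and 1 - (max(1-√r,0))² for r > 1/4; define β̄*(r) = min(1, (r+1)/2). Then for all r > 0: β̄*(r) ≤ β_IDJ*(r) ≤ β*(r). -/
import Mathlib


noncomputable def betaBar (r : ℝ) : ℝ := min 1 ((r + 1) / 2)

noncomputable def betaIDJ (r : ℝ) : ℝ :=
  if r ≤ 1 / 4 then 1 / 2 + r else 1 - (max (1 - Real.sqrt r) 0) ^ 2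

noncomputable def betaStar (r : ℝ) : ℝ :=
  if r ≤ 1 / 5 then (1 + 3 * r) / 2 else Real.sqrt (1 - (max (1 - 2 * r) 0) ^ 2)

theorem boundaries_ordered (r : ℝ) (hr : 0 < r) :
    betaBar r ≤ betaIDJ r ∧ betaIDJ r ≤ betaStar r := by
  have hs : Real.sqrt r ^ 2 = r := Real.sq_sqrt hr.le
  have hs0 : 0 ≤ Real.sqrt r := Real.sqrt_nonneg r
  constructor
  · unfold betaBar betaIDJ
    split_ifs with h
    · exact le_trans (min_le_right _ _) (by linarith)
    · push_neg at h
      rcases le_or_gt 1 (Real.sqrt r) with h1 | h1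
      · rw [max_eq_right (by linarith)]
        exact le_trans (min_le_left _ _) (by norm_num)
      · rw [max_eq_left (by linarith)]
        have hhalf : 1 / 2 < Real.sqrt r := by nlinarith
        refine le_trans (min_le_right _ _) ?_
        nlinarith [mul_nonneg (by linarith : (0:ℝ) ≤ 3 * Real.sqrt r - 1)
          (by linarith : (0:ℝ) ≤ 1 - Real.sqrt r)]
  · unfold betaIDJ betaStar
    split_ifs with h1 h2 h2
    · linarith
    · push_neg at h2
      rw [max_eq_left (by linarith)]
      rw [Real.le_sqrt (by linarith) (by nlinarith)]
      nlinarith [mul_nonneg (by linarith : (0:ℝ) ≤ r - 1/10) (by linarith : (0:ℝ) ≤ 1/2 - r)]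
    · push_neg at h1; linarith
    · push_neg at h1 h2
      rcases le_or_gt (1/2) r with h3 | h3
      · rw [show max (1 - 2 * r) 0 = 0 from max_eq_right (by linarith)]
        norm_num [Real.sqrt_one]
      · have hsl : Real.sqrt r < 1 := by nlinarith
        have hsh : 1 / 2 < Real.sqrt r := by nlinarith
        have h45 : Real.sqrt r ≤ 4 / 5 := by nlinarith
        rw [max_eq_left (by linarith), max_eq_left (by linarith)]
        rw [Real.le_sqrt (by nlinarith) (by nlinarith)]
        nlinarith [mul_nonneg (mul_nonneg (mul_nonneg hs0 hs0) hs0)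
          (by linarith : (0:ℝ) ≤ 4/5 - Real.sqrt r)]
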